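/- Feasibility with C² data (Corollary 1): let f : ℝ^{n_x} × ℝ^{n_u} → ℝ^{n_x} be Lipschitz and h : ℝ^{n_x} × ℝ^{n_u} → ℝ^{n_h} be Lipschitz. Let x : [0,1] → ℝ^{n_x} and u : [0,1] → ℝ^{n_u} be such that x′ is twice continuously differentiable and u is twice continuously differentiable, with x′(t) = f(x(t), u(t)) and h(x(t), u(t)) ≤ 0 componentwise for all t ∈ [0,1]. Then there exists C_P > 0, independent of N, such that for every sufficiently large N ∈ ℕ, the Bernstein approximations x_N = B_N x and u_N = B_N u satisfy, at every node t_j = j/N: ‖x_N′(t_j) − f(x_N(t_j), u_N(t_j))‖ ≤ C_P / N and every component of h(x_N(t_j), u_N(t_j)) is ≤ C_P / N; moreover x_N(0) = x(0) and x_N(1) = x(1). -/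

import Mathlib

open scoped BigOperators

/-- The Bernstein basis polynomial `b_{j,N}(t) = C(N,j) t^j (1-t)^(N-j)`. -/
noncomputable def bern (N j : ℕ) (t : ℝ) : ℝ :=
  (N.choose j : ℝ) * t ^ j * (1 - t) ^ (N - j)

/-- The `N`-th Bernstein approximation of `g : [0,1] → E`. -/
noncomputable def bapprox {E : Type*} [AddCommMonoid E] [Module ℝ E]
    (N : ℕ) (g : ℝ → E) (t : ℝ) : E :=
  ∑ j : Fin (N + 1), bern N (j : ℕ) t • g (((j : ℕ) : ℝ) / (N : ℝ))

open Set

lemma bern_eq_eval (N j : ℕ) (t : ℝ) :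
    bern N j t = (bernsteinPolynomial ℝ N j).eval t := by
  simp [bern, bernsteinPolynomial]

lemma bern_nonneg {N j : ℕ} {t : ℝ} (ht : t ∈ Set.Icc (0:ℝ) 1) : 0 ≤ bern N j t := by
  obtain ⟨h0, h1⟩ := ht
  have : (0:ℝ) ≤ 1 - t := by linarith
  unfold bern
  positivity

lemma bern_sum (N : ℕ) (t : ℝ) :
    ∑ j ∈ Finset.range (N + 1), bern N j t = 1 := by
  have := bernsteinPolynomial.sum ℝ N
  have h2 := congrArg (Polynomial.eval t) this
  simpa [Polynomial.eval_finset_sum, bern_eq_eval] using h2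

lemma bern_first (N : ℕ) (t : ℝ) :
    ∑ j ∈ Finset.range (N + 1), (j : ℝ) * bern N j t = N * t := by
  have := bernsteinPolynomial.sum_smul ℝ N
  have h2 := congrArg (Polynomial.eval t) this
  simp [Polynomial.eval_finset_sum, bern_eq_eval] at h2
  simpa [bern_eq_eval] using h2

lemma bern_var {N : ℕ} (hN : 0 < N) (t : ℝ) (ht : t ∈ Set.Icc (0:ℝ) 1) :
    ∑ j ∈ Finset.range (N + 1), (t - (j:ℝ)/(N:ℝ))^2 * bern N j t = t * (1 - t) / N := by
  have := bernstein.variance (n := N) (by omega) ⟨t, ht⟩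
  rw [← Fin.sum_univ_eq_sum_range]
  simpa [bernstein.z, bern, bernstein_apply] using this


variable {E : Type*} [NormedAddCommGroup E] [NormedSpace ℝ E]

lemma lip_of_deriv {g g1 : ℝ → E} {M : ℝ}
    (hg : ∀ s ∈ Icc (0:ℝ) 1, HasDerivWithinAt g (g1 s) (Icc (0:ℝ) 1) s)
    (hM : ∀ s ∈ Icc (0:ℝ) 1, ‖g1 s‖ ≤ M)
    {a b : ℝ} (ha : a ∈ Icc (0:ℝ) 1) (hb : b ∈ Icc (0:ℝ) 1) :
    ‖g b - g a‖ ≤ M * |b - a| := by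
  have := (convex_Icc (0:ℝ) 1).norm_image_sub_le_of_norm_hasDerivWithin_le hg hM ha hb
  simpa [Real.norm_eq_abs] using this

lemma taylor_one {g g1 g2 : ℝ → E} {M : ℝ}
    (hg : ∀ s ∈ Icc (0:ℝ) 1, HasDerivWithinAt g (g1 s) (Icc (0:ℝ) 1) s)
    (hg1 : ∀ s ∈ Icc (0:ℝ) 1, HasDerivWithinAt g1 (g2 s) (Icc (0:ℝ) 1) s)
    (hM : ∀ s ∈ Icc (0:ℝ) 1, ‖g2 s‖ ≤ M)
    {a b : ℝ} (ha : a ∈ Icc (0:ℝ) 1) (hb : b ∈ Icc (0:ℝ) 1) :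
    ‖g b - g a - (b - a) • g1 a‖ ≤ M * (b - a)^2 := by
  set J : Set ℝ := Icc (min a b) (max a b) with hJ
  have hJsub : J ⊆ Icc (0:ℝ) 1 := by
    apply Icc_subset_Icc
    · exact le_min ha.1 hb.1
    · exact max_le ha.2 hb.2
  have haJ : a ∈ J := ⟨min_le_left _ _, le_max_left _ _⟩
  have hbJ : b ∈ J := ⟨min_le_right _ _, le_max_right _ _⟩
  set φ : ℝ → E := fun s => g s - s • g1 a with hφ
  have hder : ∀ s ∈ J, HasDerivWithinAt φ (g1 s - g1 a) J s := by
    intro s hs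
    exact ((hg s (hJsub hs)).mono hJsub).sub
      ((hasDerivWithinAt_id s J).smul_const (g1 a) |>.congr_deriv (by simp))
  have hbound : ∀ s ∈ J, ‖g1 s - g1 a‖ ≤ M * |b - a| := by
    intro s hs
    have h1 := lip_of_deriv hg1 hM ha (hJsub hs)
    have h2 : |s - a| ≤ |b - a| := by
      rcases hs with ⟨hs1, hs2⟩
      rcases le_total a b with hab | hab
      · simp [hab] at hs1 hs2
        rw [abs_of_nonneg (by linarith), abs_of_nonneg (by linarith : (0:ℝ) ≤ b - a)]
        linarith
      · simp [hab] at hs1 hs2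
        rw [abs_of_nonpos (by linarith), abs_of_nonpos (by linarith : b - a ≤ 0)]
        linarith
    have hM0 : 0 ≤ M := le_trans (norm_nonneg _) (hM a ha)
    calc ‖g1 s - g1 a‖ ≤ M * |s - a| := by
          have := lip_of_deriv hg1 hM ha (hJsub hs); rwa [norm_sub_rev] at this
      _ ≤ M * |b - a| := by exact mul_le_mul_of_nonneg_left h2 hM0
  have := (convex_Icc (min a b) (max a b)).norm_image_sub_le_of_norm_hasDerivWithin_le
    hder hbound haJ hbJ
  have heq : φ b - φ a = g b - g a - (b - a) • g1 a := by
    simp only [hφ, sub_smul]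
    abel
  rw [heq] at this
  calc ‖g b - g a - (b - a) • g1 a‖ ≤ M * |b - a| * ‖b - a‖ := this
    _ = M * (b - a)^2 := by rw [Real.norm_eq_abs, mul_assoc, ← abs_mul, abs_mul_self]; ring

lemma bapprox_eq_range {E : Type*} [AddCommMonoid E] [Module ℝ E]
    (N : ℕ) (g : ℝ → E) (t : ℝ) :
    bapprox N g t = ∑ j ∈ Finset.range (N + 1), bern N j t • g ((j : ℝ) / (N : ℝ)) := by
  rw [bapprox, Fin.sum_univ_eq_sum_range (fun j => bern N j t • g ((j : ℝ) / (N : ℝ)))]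

lemma bern_choose_zero {m j : ℕ} (h : m < j) (t : ℝ) : bern m j t = 0 := by
  simp [bern, Nat.choose_eq_zero_of_lt h]

lemma bapprox_hasDerivAt {E : Type*} [NormedAddCommGroup E] [NormedSpace ℝ E]
    (g : ℝ → E) {N : ℕ} (hN : 1 ≤ N) (t : ℝ) :
    HasDerivAt (bapprox N g)
      (∑ k ∈ Finset.range N, ((N:ℝ) * bern (N-1) k t) •
        (g (((k:ℝ)+1) / (N:ℝ)) - g ((k:ℝ) / (N:ℝ)))) t := by
  obtain ⟨m, rfl⟩ : ∃ m, N = m + 1 := ⟨N - 1, (Nat.succ_pred_eq_of_pos hN).symm⟩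
  have hfun : bapprox (m+1) g =
      fun s => ∑ j ∈ Finset.range (m + 2),
        (bernsteinPolynomial ℝ (m+1) j).eval s • g ((j : ℝ) / ((m:ℝ)+1)) := by
    funext s
    rw [bapprox_eq_range]
    push_cast
    exact Finset.sum_congr rfl fun j _ => by rw [bern_eq_eval]
  rw [hfun]
  have hder : HasDerivAt
      (fun s => ∑ j ∈ Finset.range (m + 2),
        (bernsteinPolynomial ℝ (m+1) j).eval s • g ((j : ℝ) / ((m:ℝ)+1)))
      (∑ j ∈ Finset.range (m + 2),
        ((Polynomial.derivative (bernsteinPolynomial ℝ (m+1) j)).eval t) •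
          g ((j : ℝ) / ((m:ℝ)+1))) t := by
    apply HasDerivAt.fun_sum
    intro j _
    exact ((bernsteinPolynomial ℝ (m+1) j).hasDerivAt t).smul_const _
  convert hder using 1
  -- now the algebraic identity
  set c : ℕ → E := fun j => g ((j : ℝ) / ((m:ℝ)+1)) with hc
  set e : ℕ → ℝ := fun j => bern m j t with he
  have hdz : (Polynomial.derivative (bernsteinPolynomial ℝ (m+1) 0)).eval t
      = -((m:ℝ)+1) * e 0 := by
    rw [bernsteinPolynomial.derivative_zero]
    simp [he, bern_eq_eval]
  have hds : ∀ j, (Polynomial.derivative (bernsteinPolynomial ℝ (m+1) (j+1))).eval t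
      = ((m:ℝ)+1) * (e j - e (j+1)) := by
    intro j
    rw [bernsteinPolynomial.derivative_succ]
    simp [he, bern_eq_eval]
  have htarget : ∀ k ∈ Finset.range (m+1),
      (((m+1:ℕ):ℝ) * bern (m+1-1) k t) • (g (((k:ℝ)+1) / ((m+1:ℕ):ℝ)) - g ((k:ℝ) / ((m+1:ℕ):ℝ)))
      = (((m:ℝ)+1) * e k) • c (k+1) - (((m:ℝ)+1) * e k) • c k := by
    intro k _
    rw [← smul_sub]
    have ha : (((m+1:ℕ):ℝ) * bern (m+1-1) k t) = ((m:ℝ)+1) * e k := by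
      simp [he]
    have hb : ((k:ℝ)+1) / ((m+1:ℕ):ℝ) = (((k+1:ℕ)):ℝ) / (((m+1:ℕ)):ℝ) := by push_cast; ring
    rw [ha, hb]
    simp [hc]
  rw [Finset.sum_congr rfl htarget, Finset.sum_sub_distrib]
  have h1 : ∑ j ∈ Finset.range (m+1), (((m:ℝ)+1) * e (j+1)) • c (j+1) + (((m:ℝ)+1) * e 0) • c 0
      = ∑ j ∈ Finset.range (m+1), (((m:ℝ)+1) * e j) • c j := by
    rw [← Finset.sum_range_succ' (fun j => (((m:ℝ)+1) * e j) • c j) (m+1)]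
    rw [Finset.sum_range_succ]
    have : e (m+1) = 0 := bern_choose_zero (Nat.lt_succ_self m) t
    simp [this]
  conv_rhs => rw [Finset.sum_range_succ']
  rw [hdz]
  have hstep : ∀ j ∈ Finset.range (m+1),
      (Polynomial.eval t (Polynomial.derivative (bernsteinPolynomial ℝ (m+1) (j+1)))) • c (j+1)
      = (((m:ℝ)+1) * e j) • c (j+1) - (((m:ℝ)+1) * e (j+1)) • c (j+1) := by
    intro j _
    rw [hds j, mul_sub, sub_smul]
  rw [Finset.sum_congr rfl hstep, Finset.sum_sub_distrib, neg_mul, neg_smul, ← h1]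
  abel

lemma node_mem {N j : ℕ} (hN : 0 < N) (hj : j ≤ N) : (j:ℝ)/(N:ℝ) ∈ Icc (0:ℝ) 1 := by
  have hNR : (0:ℝ) < N := by exact_mod_cast hN
  constructor
  · positivity
  · rw [div_le_one hNR]; exact_mod_cast hj

lemma bapprox_close {E : Type*} [NormedAddCommGroup E] [NormedSpace ℝ E]
    {g g1 g2 : ℝ → E} {M : ℝ}
    (hg : ∀ s ∈ Icc (0:ℝ) 1, HasDerivWithinAt g (g1 s) (Icc (0:ℝ) 1) s)
    (hg1 : ∀ s ∈ Icc (0:ℝ) 1, HasDerivWithinAt g1 (g2 s) (Icc (0:ℝ) 1) s)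
    (hM : ∀ s ∈ Icc (0:ℝ) 1, ‖g2 s‖ ≤ M)
    {N : ℕ} (hN : 0 < N) {t : ℝ} (ht : t ∈ Icc (0:ℝ) 1) :
    ‖bapprox N g t - g t‖ ≤ M / N := by
  have hM0 : 0 ≤ M := le_trans (norm_nonneg _) (hM t ht)
  have hNR : (0:ℝ) < N := by exact_mod_cast hN
  set R : ℕ → E := fun j => g ((j:ℝ)/(N:ℝ)) - g t - ((j:ℝ)/(N:ℝ) - t) • g1 t with hR
  have hzero : ∑ j ∈ Finset.range (N+1), bern N j t * ((j:ℝ)/(N:ℝ) - t) = 0 := by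
    have e1 : ∑ j ∈ Finset.range (N+1), bern N j t * ((j:ℝ)/(N:ℝ) - t)
        = (∑ j ∈ Finset.range (N+1), (j:ℝ) * bern N j t)/(N:ℝ)
          - (∑ j ∈ Finset.range (N+1), bern N j t) * t := by
      rw [Finset.sum_div, Finset.sum_mul, ← Finset.sum_sub_distrib]
      exact Finset.sum_congr rfl fun j _ => by field_simp
    rw [e1, bern_first, bern_sum]
    field_simp
    ring
  have key : bapprox N g t - g t = ∑ j ∈ Finset.range (N+1), bern N j t • R j := by
    have e1 : ∑ j ∈ Finset.range (N+1), bern N j t • R j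
        = (∑ j ∈ Finset.range (N+1), bern N j t • g ((j:ℝ)/(N:ℝ)))
          - (∑ j ∈ Finset.range (N+1), bern N j t) • g t
          - (∑ j ∈ Finset.range (N+1), bern N j t * ((j:ℝ)/(N:ℝ) - t)) • g1 t := by
      simp only [hR, smul_sub, smul_smul, Finset.sum_sub_distrib, Finset.sum_smul]
    rw [e1, bern_sum, hzero, bapprox_eq_range]
    simp
  rw [key]
  have hbound : ∀ j ∈ Finset.range (N+1),
      ‖bern N j t • R j‖ ≤ M * ((t - (j:ℝ)/(N:ℝ))^2 * bern N j t) := by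
    intro j hj
    have hjN : j ≤ N := Nat.lt_succ_iff.mp (Finset.mem_range.mp hj)
    have hnode := node_mem hN hjN
    have hRj : ‖R j‖ ≤ M * ((j:ℝ)/(N:ℝ) - t)^2 := taylor_one hg hg1 hM ht hnode
    rw [norm_smul, Real.norm_eq_abs, abs_of_nonneg (bern_nonneg ht)]
    calc bern N j t * ‖R j‖ ≤ bern N j t * (M * ((j:ℝ)/(N:ℝ) - t)^2) :=
          mul_le_mul_of_nonneg_left hRj (bern_nonneg ht)
      _ = M * ((t - (j:ℝ)/(N:ℝ))^2 * bern N j t) := by ring_nf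
  calc ‖∑ j ∈ Finset.range (N+1), bern N j t • R j‖
      ≤ ∑ j ∈ Finset.range (N+1), M * ((t - (j:ℝ)/(N:ℝ))^2 * bern N j t) :=
        norm_sum_le_of_le _ hbound
    _ = M * ∑ j ∈ Finset.range (N+1), (t - (j:ℝ)/(N:ℝ))^2 * bern N j t := by
        rw [Finset.mul_sum]
    _ = M * (t * (1 - t) / N) := by rw [bern_var hN t ht]
    _ ≤ M / N := by
        rw [← mul_div_assoc]
        have h1 : M * (t * (1 - t)) ≤ M := by nlinarith [mul_nonneg hM0 (sub_nonneg.2 ht.2), mul_nonneg hM0 (sq_nonneg t)]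
        exact (div_le_div_iff_of_pos_right hNR).mpr h1


lemma bapprox_deriv_close {E : Type*} [NormedAddCommGroup E] [NormedSpace ℝ E]
    {g g1 g2 g3 : ℝ → E} {M2 M3 : ℝ}
    (hg : ∀ s ∈ Icc (0:ℝ) 1, HasDerivWithinAt g (g1 s) (Icc (0:ℝ) 1) s)
    (hg1 : ∀ s ∈ Icc (0:ℝ) 1, HasDerivWithinAt g1 (g2 s) (Icc (0:ℝ) 1) s)
    (hg2 : ∀ s ∈ Icc (0:ℝ) 1, HasDerivWithinAt g2 (g3 s) (Icc (0:ℝ) 1) s)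
    (hM2 : ∀ s ∈ Icc (0:ℝ) 1, ‖g2 s‖ ≤ M2)
    (hM3 : ∀ s ∈ Icc (0:ℝ) 1, ‖g3 s‖ ≤ M3)
    {N : ℕ} (hN : 2 ≤ N) {t : ℝ} (ht : t ∈ Icc (0:ℝ) 1) :
    ‖deriv (bapprox N g) t - g1 t‖ ≤ (2*M2 + 2*M3)/N := by
  have hM20 : 0 ≤ M2 := le_trans (norm_nonneg _) (hM2 t ht)
  have hM30 : 0 ≤ M3 := le_trans (norm_nonneg _) (hM3 t ht)
  obtain ⟨K, rfl⟩ : ∃ K, N = K + 1 := ⟨N - 1, (Nat.succ_pred_eq_of_pos (by omega)).symm⟩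
  have hK1 : 1 ≤ K := by omega
  set N := K + 1 with hNdef
  have hNR : (0:ℝ) < N := by positivity
  have hKR : (0:ℝ) < K := by exact_mod_cast hK1
  have hder := bapprox_hasDerivAt g (N := N) (by omega) t
  rw [hder.deriv]
  have hN1 : N - 1 = K := by omega
  rw [hN1]
  -- rewrite the sum
  set w : ℕ → E := fun k =>
    (N:ℝ) • (g (((k:ℝ)+1)/(N:ℝ)) - g ((k:ℝ)/(N:ℝ))) - g1 ((k:ℝ)/(K:ℝ)) with hw
  have hsplit :
      (∑ k ∈ Finset.range N, ((N:ℝ) * bern K k t) •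
        (g (((k:ℝ)+1)/(N:ℝ)) - g ((k:ℝ)/(N:ℝ)))) - g1 t
      = (∑ k ∈ Finset.range N, bern K k t • w k) + (bapprox K g1 t - g1 t) := by
    have e0 : ∀ k ∈ Finset.range N, ((N:ℝ) * bern K k t) •
          (g (((k:ℝ)+1)/(N:ℝ)) - g ((k:ℝ)/(N:ℝ)))
        = bern K k t • w k + bern K k t • g1 ((k:ℝ)/(K:ℝ)) := by
      intro k _
      rw [hw]
      module
    rw [Finset.sum_congr rfl e0, Finset.sum_add_distrib, bapprox_eq_range]
    abel
  rw [hsplit]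
  have hwk : ∀ k ∈ Finset.range N, ‖w k‖ ≤ 2*M2/N := by
    intro k hk
    have hkK : k ≤ K := by
      have := Finset.mem_range.mp hk; omega
    have hnodeN : (k:ℝ)/(N:ℝ) ∈ Icc (0:ℝ) 1 := node_mem (by omega) (by omega)
    have hkNR : (k:ℝ) + 1 ≤ (N:ℝ) := by
      have : (k+1 : ℕ) ≤ N := by omega
      exact_mod_cast this
    have hnodeN' : ((k:ℝ)+1)/(N:ℝ) ∈ Icc (0:ℝ) 1 := by
      constructor
      · positivity
      · rw [div_le_one hNR]; exact hkNR
    have hnodeK : (k:ℝ)/(K:ℝ) ∈ Icc (0:ℝ) 1 := node_mem (by omega) hkK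
    have h1 : ‖g (((k:ℝ)+1)/(N:ℝ)) - g ((k:ℝ)/(N:ℝ)) - (1/(N:ℝ)) • g1 ((k:ℝ)/(N:ℝ))‖
        ≤ M2 / (N:ℝ)^2 := by
      have := taylor_one hg hg1 hM2 hnodeN hnodeN'
      have harg : ((k:ℝ)+1)/(N:ℝ) - (k:ℝ)/(N:ℝ) = 1/(N:ℝ) := by field_simp; ring
      rw [harg] at this
      calc ‖_‖ ≤ M2 * (1/(N:ℝ))^2 := this
        _ = M2 / (N:ℝ)^2 := by field_simp
    have h2 : ‖(N:ℝ) • (g (((k:ℝ)+1)/(N:ℝ)) - g ((k:ℝ)/(N:ℝ))) - g1 ((k:ℝ)/(N:ℝ))‖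
        ≤ M2 / N := by
      have heq : (N:ℝ) • (g (((k:ℝ)+1)/(N:ℝ)) - g ((k:ℝ)/(N:ℝ))) - g1 ((k:ℝ)/(N:ℝ))
          = (N:ℝ) • (g (((k:ℝ)+1)/(N:ℝ)) - g ((k:ℝ)/(N:ℝ)) - (1/(N:ℝ)) • g1 ((k:ℝ)/(N:ℝ))) := by
        have hNne : (N:ℝ) ≠ 0 := ne_of_gt hNR
        match_scalars <;> field_simp
      rw [heq, norm_smul, Real.norm_eq_abs, abs_of_pos hNR]
      calc (N:ℝ) * ‖_‖ ≤ (N:ℝ) * (M2 / (N:ℝ)^2) := mul_le_mul_of_nonneg_left h1 (le_of_lt hNR)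
        _ = M2 / N := by field_simp
    have h3 : ‖g1 ((k:ℝ)/(N:ℝ)) - g1 ((k:ℝ)/(K:ℝ))‖ ≤ M2 / N := by
      have hlip := lip_of_deriv hg1 hM2 hnodeK hnodeN
      have hNK : (N:ℝ) = (K:ℝ) + 1 := by push_cast [hNdef]; ring
      have hkKR : (k:ℝ) ≤ (K:ℝ) := by exact_mod_cast hkK
      have habs : |(k:ℝ)/(N:ℝ) - (k:ℝ)/(K:ℝ)| ≤ 1/(N:ℝ) := by
        have e : (k:ℝ)/(N:ℝ) - (k:ℝ)/(K:ℝ) = -((k:ℝ)/((N:ℝ)*(K:ℝ))) := by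
          rw [hNK]; field_simp; ring
        rw [e, abs_neg, abs_of_nonneg (by positivity)]
        rw [div_le_div_iff₀ (by positivity) hNR]
        nlinarith
      calc ‖g1 ((k:ℝ)/(N:ℝ)) - g1 ((k:ℝ)/(K:ℝ))‖ ≤ M2 * |(k:ℝ)/(N:ℝ) - (k:ℝ)/(K:ℝ)| := hlip
        _ ≤ M2 * (1/(N:ℝ)) := mul_le_mul_of_nonneg_left habs hM20
        _ = M2 / N := mul_one_div _ _
    calc ‖w k‖ ≤ ‖(N:ℝ) • (g (((k:ℝ)+1)/(N:ℝ)) - g ((k:ℝ)/(N:ℝ))) - g1 ((k:ℝ)/(N:ℝ))‖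
          + ‖g1 ((k:ℝ)/(N:ℝ)) - g1 ((k:ℝ)/(K:ℝ))‖ := by
          have hwk2 : w k = ((N:ℝ) • (g (((k:ℝ)+1)/(N:ℝ)) - g ((k:ℝ)/(N:ℝ))) - g1 ((k:ℝ)/(N:ℝ)))
              + (g1 ((k:ℝ)/(N:ℝ)) - g1 ((k:ℝ)/(K:ℝ))) := by rw [hw]; abel
          rw [hwk2]
          exact norm_add_le _ _
      _ ≤ M2/N + M2/N := add_le_add h2 h3
      _ = 2*M2/N := by ring
  have hsum1 : ‖∑ k ∈ Finset.range N, bern K k t • w k‖ ≤ 2*M2/N := by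
    calc ‖∑ k ∈ Finset.range N, bern K k t • w k‖
        ≤ ∑ k ∈ Finset.range N, bern K k t * (2*M2/N) := by
          apply norm_sum_le_of_le
          intro k hk
          rw [norm_smul, Real.norm_eq_abs, abs_of_nonneg (bern_nonneg ht)]
          exact mul_le_mul_of_nonneg_left (hwk k hk) (bern_nonneg ht)
      _ = (∑ k ∈ Finset.range N, bern K k t) * (2*M2/N) := by rw [Finset.sum_mul]
      _ = 2*M2/N := by rw [show N = K + 1 from rfl, bern_sum]; ring
  have hsum2 : ‖bapprox K g1 t - g1 t‖ ≤ 2*M3/N := by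
    have := bapprox_close hg1 hg2 hM3 (by omega : 0 < K) ht
    calc ‖bapprox K g1 t - g1 t‖ ≤ M3 / K := this
      _ ≤ 2*M3/N := by
        rw [div_le_div_iff₀ hKR hNR]
        have hNK : (N:ℝ) = (K:ℝ) + 1 := by push_cast [hNdef]; ring
        have h1K : (1:ℝ) ≤ (K:ℝ) := by exact_mod_cast hK1
        nlinarith [mul_nonneg hM30 (sub_nonneg.2 h1K)]
  calc ‖(∑ k ∈ Finset.range N, bern K k t • w k) + (bapprox K g1 t - g1 t)‖
      ≤ ‖∑ k ∈ Finset.range N, bern K k t • w k‖ + ‖bapprox K g1 t - g1 t‖ := norm_add_le _ _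
    _ ≤ 2*M2/N + 2*M3/N := add_le_add hsum1 hsum2
    _ = (2*M2 + 2*M3)/N := by ring

lemma bapprox_at_zero {E : Type*} [NormedAddCommGroup E] [NormedSpace ℝ E]
    {N : ℕ} (hN : 0 < N) (g : ℝ → E) : bapprox N g 0 = g 0 := by
  rw [bapprox_eq_range]
  rw [Finset.sum_eq_single 0]
  · simp [bern]
  · intro j _ hj
    have : bern N j 0 = 0 := by
      simp [bern, zero_pow hj]
    simp [this]
  · intro hmem
    exact absurd (Finset.mem_range.mpr (Nat.succ_pos N)) hmem

lemma bapprox_at_one {E : Type*} [NormedAddCommGroup E] [NormedSpace ℝ E]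
    {N : ℕ} (hN : 0 < N) (g : ℝ → E) : bapprox N g 1 = g 1 := by
  have hNne : (N:ℝ) ≠ 0 := by positivity
  rw [bapprox_eq_range]
  rw [Finset.sum_eq_single N]
  · rw [div_self hNne]
    simp [bern]
  · intro j hj hjN
    have hjlt : j < N := by
      have := Finset.mem_range.mp hj; omega
    have : bern N j 1 = 0 := by
      have : N - j ≠ 0 := by omega
      simp [bern, zero_pow this]
    simp [this]
  · intro hmem
    exact absurd (Finset.mem_range.mpr (by omega)) hmem

lemma abs_apply_le_norm {n : ℕ} (v : EuclideanSpace ℝ (Fin n)) (i : Fin n) :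
    |v i| ≤ ‖v‖ := by
  rw [EuclideanSpace.norm_eq]
  have h1 : |v i| = Real.sqrt (‖v i‖^2) := by
    rw [Real.sqrt_sq_eq_abs, Real.norm_eq_abs, abs_abs]
  rw [h1]
  apply Real.sqrt_le_sqrt
  exact Finset.single_le_sum (f := fun j => ‖v j‖^2) (fun j _ => by positivity)
    (Finset.mem_univ i)

set_option maxHeartbeats 1000000 in
/-- Corollary 1, Feasibility with C² data: if `x'` and `u` are twice
continuously differentiable, the Bernstein approximations satisfy the relaxed
constraints at all nodes with relaxation bound `C_P / N`, and match the boundary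
values of `x`. -/
theorem bernstein_discretization_feasibility_C2 (nx nu nh : ℕ)
    (f : EuclideanSpace ℝ (Fin nx) × EuclideanSpace ℝ (Fin nu) → EuclideanSpace ℝ (Fin nx))
    (h : EuclideanSpace ℝ (Fin nx) × EuclideanSpace ℝ (Fin nu) → EuclideanSpace ℝ (Fin nh))
    (Lf Lh : NNReal) (hf : LipschitzWith Lf f) (hh : LipschitzWith Lh h)
    (x x' : ℝ → EuclideanSpace ℝ (Fin nx)) (u : ℝ → EuclideanSpace ℝ (Fin nu))
    (hxd : ∀ t ∈ Set.Icc (0:ℝ) 1, HasDerivWithinAt x (x' t) (Set.Icc (0:ℝ) 1) t)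
    (hx' : ContDiffOn ℝ 2 x' (Set.Icc (0:ℝ) 1))
    (hu : ContDiffOn ℝ 2 u (Set.Icc (0:ℝ) 1))
    (hdyn : ∀ t ∈ Set.Icc (0:ℝ) 1, x' t = f (x t, u t))
    (hineq : ∀ t ∈ Set.Icc (0:ℝ) 1, ∀ i, h (x t, u t) i ≤ 0) :
    ∃ CP : ℝ, 0 < CP ∧ ∃ N₀ : ℕ, ∀ N : ℕ, N₀ ≤ N → ∀ j : ℕ, j ≤ N →
      ‖deriv (bapprox N x) ((j : ℝ) / (N : ℝ))
          - f (bapprox N x ((j : ℝ) / (N : ℝ)), bapprox N u ((j : ℝ) / (N : ℝ)))‖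
        ≤ CP / (N : ℝ) ∧
      (∀ i, h (bapprox N x ((j : ℝ) / (N : ℝ)), bapprox N u ((j : ℝ) / (N : ℝ))) i
        ≤ CP / (N : ℝ)) ∧
      bapprox N x 0 = x 0 ∧ bapprox N x 1 = x 1 := by
  have huniq : UniqueDiffOn ℝ (Icc (0:ℝ) 1) := uniqueDiffOn_Icc one_pos
  -- derivative chains
  set x2 : ℝ → EuclideanSpace ℝ (Fin nx) := derivWithin x' (Icc (0:ℝ) 1) with hx2def
  set x3 : ℝ → EuclideanSpace ℝ (Fin nx) := derivWithin x2 (Icc (0:ℝ) 1) with hx3def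
  set u1 : ℝ → EuclideanSpace ℝ (Fin nu) := derivWithin u (Icc (0:ℝ) 1) with hu1def
  set u2 : ℝ → EuclideanSpace ℝ (Fin nu) := derivWithin u1 (Icc (0:ℝ) 1) with hu2def
  have hx2cd : ContDiffOn ℝ 1 x2 (Icc (0:ℝ) 1) := hx'.derivWithin huniq (by norm_num)
  have hu1cd : ContDiffOn ℝ 1 u1 (Icc (0:ℝ) 1) := hu.derivWithin huniq (by norm_num)
  have hx'1 : ∀ s ∈ Icc (0:ℝ) 1, HasDerivWithinAt x' (x2 s) (Icc (0:ℝ) 1) s :=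
    fun s hs => ((hx'.differentiableOn (by norm_num)) s hs).hasDerivWithinAt
  have hx2' : ∀ s ∈ Icc (0:ℝ) 1, HasDerivWithinAt x2 (x3 s) (Icc (0:ℝ) 1) s :=
    fun s hs => ((hx2cd.differentiableOn (by norm_num)) s hs).hasDerivWithinAt
  have hu1 : ∀ s ∈ Icc (0:ℝ) 1, HasDerivWithinAt u (u1 s) (Icc (0:ℝ) 1) s :=
    fun s hs => ((hu.differentiableOn (by norm_num)) s hs).hasDerivWithinAt
  have hu2 : ∀ s ∈ Icc (0:ℝ) 1, HasDerivWithinAt u1 (u2 s) (Icc (0:ℝ) 1) s :=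
    fun s hs => ((hu1cd.differentiableOn (by norm_num)) s hs).hasDerivWithinAt
  -- bounds
  obtain ⟨M2, hM2⟩ := isCompact_Icc.exists_bound_of_continuousOn hx2cd.continuousOn
  obtain ⟨M3, hM3⟩ := isCompact_Icc.exists_bound_of_continuousOn
    (hx2cd.continuousOn_derivWithin huniq (le_refl 1))
  obtain ⟨M2u, hM2u⟩ := isCompact_Icc.exists_bound_of_continuousOn
    (hu1cd.continuousOn_derivWithin huniq (le_refl 1))
  have h0mem : (0:ℝ) ∈ Icc (0:ℝ) 1 := ⟨le_refl 0, zero_le_one⟩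
  have hM20 : 0 ≤ M2 := le_trans (norm_nonneg _) (hM2 0 h0mem)
  have hM30 : 0 ≤ M3 := le_trans (norm_nonneg _) (hM3 0 h0mem)
  have hM2u0 : 0 ≤ M2u := le_trans (norm_nonneg _) (hM2u 0 h0mem)
  set CP : ℝ := 2*M2 + 2*M3 + ((Lf:ℝ) + (Lh:ℝ)) * (M2 + M2u) + 1 with hCP
  have hLf0 : (0:ℝ) ≤ (Lf:ℝ) := Lf.coe_nonneg
  have hLh0 : (0:ℝ) ≤ (Lh:ℝ) := Lh.coe_nonneg
  have hCP0 : 0 < CP := by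
    have : 0 ≤ ((Lf:ℝ) + (Lh:ℝ)) * (M2 + M2u) := by positivity
    simp only [hCP]; linarith
  refine ⟨CP, hCP0, 2, ?_⟩
  intro N hN j hj
  have hNpos : 0 < N := by omega
  have hNR : (0:ℝ) < N := by exact_mod_cast hNpos
  set t : ℝ := (j:ℝ)/(N:ℝ) with htdef
  have ht : t ∈ Icc (0:ℝ) 1 := node_mem hNpos hj
  -- approximation bounds
  have hAx : ‖bapprox N x t - x t‖ ≤ M2 / N := bapprox_close hxd hx'1 hM2 hNpos ht
  have hAu : ‖bapprox N u t - u t‖ ≤ M2u / N := bapprox_close hu1 hu2 hM2u hNpos ht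
  have hD : ‖deriv (bapprox N x) t - x' t‖ ≤ (2*M2 + 2*M3)/N :=
    bapprox_deriv_close hxd hx'1 hx2' hM2 hM3 hN ht
  -- Lipschitz estimates
  set P : EuclideanSpace ℝ (Fin nx) × EuclideanSpace ℝ (Fin nu) :=
    (bapprox N x t, bapprox N u t) with hP
  set Q : EuclideanSpace ℝ (Fin nx) × EuclideanSpace ℝ (Fin nu) := (x t, u t) with hQ
  have hdistPQ : dist P Q ≤ (M2 + M2u)/N := by
    rw [Prod.dist_eq]
    apply max_le
    · rw [dist_eq_norm]
      calc ‖bapprox N x t - x t‖ ≤ M2/N := hAx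
        _ ≤ (M2 + M2u)/N := (div_le_div_iff_of_pos_right hNR).mpr (by linarith)
    · rw [dist_eq_norm]
      calc ‖bapprox N u t - u t‖ ≤ M2u/N := hAu
        _ ≤ (M2 + M2u)/N := (div_le_div_iff_of_pos_right hNR).mpr (by linarith)
  have hfPQ : ‖f P - f Q‖ ≤ (Lf:ℝ) * ((M2 + M2u)/N) := by
    rw [← dist_eq_norm]
    calc dist (f P) (f Q) ≤ (Lf:ℝ) * dist P Q := hf.dist_le_mul P Q
      _ ≤ (Lf:ℝ) * ((M2 + M2u)/N) := mul_le_mul_of_nonneg_left hdistPQ hLf0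
  have hhPQ : ‖h P - h Q‖ ≤ (Lh:ℝ) * ((M2 + M2u)/N) := by
    rw [← dist_eq_norm]
    calc dist (h P) (h Q) ≤ (Lh:ℝ) * dist P Q := hh.dist_le_mul P Q
      _ ≤ (Lh:ℝ) * ((M2 + M2u)/N) := mul_le_mul_of_nonneg_left hdistPQ hLh0
  refine ⟨?_, ?_, bapprox_at_zero hNpos x, bapprox_at_one hNpos x⟩
  · -- dynamics
    calc ‖deriv (bapprox N x) t - f P‖
        ≤ ‖deriv (bapprox N x) t - x' t‖ + ‖x' t - f P‖ := by
          have : deriv (bapprox N x) t - f P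
              = (deriv (bapprox N x) t - x' t) + (x' t - f P) := by abel
          rw [this]; exact norm_add_le _ _
      _ ≤ (2*M2 + 2*M3)/N + (Lf:ℝ) * ((M2 + M2u)/N) := by
          apply add_le_add hD
          rw [hdyn t ht, ← hQ]
          rw [norm_sub_rev]
          exact hfPQ
      _ = ((2*M2 + 2*M3) + (Lf:ℝ)*(M2 + M2u))/N := by ring
      _ ≤ CP / N := by
          apply (div_le_div_iff_of_pos_right hNR).mpr
          have h1 : 0 ≤ (Lh:ℝ)*(M2 + M2u) := mul_nonneg hLh0 (by linarith)
          rw [hCP]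
          nlinarith
  · -- inequality constraints
    intro i
    have hcomp : h P i - h Q i ≤ ‖h P - h Q‖ := by
      have h1 : h P i - h Q i = (h P - h Q) i := by simp
      rw [h1]
      exact le_trans (le_abs_self _) (abs_apply_le_norm _ i)
    have hQ0 : h Q i ≤ 0 := hineq t ht i
    have : h P i ≤ (Lh:ℝ) * ((M2 + M2u)/N) := by
      have := le_trans hcomp hhPQ
      linarith
    calc h P i ≤ (Lh:ℝ) * ((M2 + M2u)/N) := this
      _ = ((Lh:ℝ)*(M2 + M2u))/N := by ring
      _ ≤ CP / N := by
          apply (div_le_div_iff_of_pos_right hNR).mpr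
          have h1 : 0 ≤ (Lf:ℝ)*(M2 + M2u) := mul_nonneg hLf0 (by linarith)
          rw [hCP]
          nlinarith
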